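/- If a non-final state ⟨X,t⟩ of S_π with t > 0 is reachable from the initial state, then the state ⟨X,t−1⟩ is reachable from the initial state; consequently, if ⟨X,t⟩ is reachable then ⟨X,0⟩ is reachable. -/

import Mathlib

variable {A : Type*}

/-- One transition of the subset seed automaton `S_π`: the state `none` is the final sink
state, a state `some (X, t)` is the non-final state `⟨X,t⟩`. -/
def seedStep [DecidableEq A] (one : A) (π : ℕ → Finset A) (s : ℕ) :
    Option (Finset ℕ × ℕ) → A → Option (Finset ℕ × ℕ)
  | none, _ => none
  | some (X, t), a =>
    if a = one then
      if X.sup id + (t + 1) = s then none else some (X, t + 1)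
    else
      let Y : Finset ℕ := ((Finset.Icc 1 (t + 1)).filter fun x => a ∈ π x) ∪
        ((X.filter fun x => x + t + 1 ≤ s ∧ a ∈ π (x + t + 1)).image fun x => x + t + 1)
      if Y.sup id = s then none else some (Y, 0)

/-- Reading a word from a state, applying transitions letter by letter. -/
def seedRead [DecidableEq A] (one : A) (π : ℕ → Finset A) (s : ℕ)
    (q : Option (Finset ℕ × ℕ)) (w : List A) : Option (Finset ℕ × ℕ) :=
  w.foldl (seedStep one π s) q

/-- `π` matches the alignment `w` at the (1-based) position `p`. -/
def seedMatches (one : A) (π : ℕ → Finset A) (s : ℕ) (w : List A) (p : ℕ) : Prop :=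
  1 ≤ p ∧ p + s ≤ w.length + 1 ∧
    ∀ i, 1 ≤ i → i ≤ s → w.getD (p + i - 2) one ∈ π i


/-- If a non-final state `⟨X,t⟩` of `S_π` with `t > 0` is reachable from the initial
state, then `⟨X,t-1⟩` is reachable; consequently, if `⟨X,t⟩` is reachable then `⟨X,0⟩`
is reachable. -/
theorem stmt_14 [DecidableEq A] (one : A) (π : ℕ → Finset A) (s : ℕ)
    (hs : 1 ≤ s) (hone : ∀ i, 1 ≤ i → i ≤ s → one ∈ π i) :
    (∀ (X : Finset ℕ) (t : ℕ), 0 < t →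
        (∃ W : List A, seedRead one π s (some (∅, 0)) W = some (X, t)) →
        ∃ W : List A, seedRead one π s (some (∅, 0)) W = some (X, t - 1)) ∧
      ∀ (X : Finset ℕ) (t : ℕ),
        (∃ W : List A, seedRead one π s (some (∅, 0)) W = some (X, t)) →
        ∃ W : List A, seedRead one π s (some (∅, 0)) W = some (X, 0) := by
  have h1 : ∀ (X : Finset ℕ) (t : ℕ), 0 < t →
      (∃ W : List A, seedRead one π s (some (∅, 0)) W = some (X, t)) →
      ∃ W : List A, seedRead one π s (some (∅, 0)) W = some (X, t - 1) := by
    rintro X t ht ⟨W, hW⟩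
    induction W using List.reverseRecOn with
    | nil =>
      simp [seedRead] at hW
      omega
    | append_singleton W' a ih =>
      rw [seedRead, List.foldl_append] at hW
      simp only [List.foldl_cons, List.foldl_nil] at hW
      rcases hq : W'.foldl (seedStep one π s) (some (∅, 0)) with _ | ⟨X', t'⟩
      · rw [hq] at hW; simp [seedStep] at hW
      · rw [hq] at hW
        by_cases ha : a = one
        · subst ha
          by_cases hsup : X'.sup id + (t' + 1) = s
          · simp [seedStep, hsup] at hW
          · simp [seedStep, hsup] at hW
            obtain ⟨h1, h2⟩ := hW
            subst h1
            refine ⟨W', ?_⟩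
            rw [seedRead, hq]
            have : t' = t - 1 := by omega
            rw [this]
        · by_cases hsup : (((Finset.Icc 1 (t' + 1)).filter fun x => a ∈ π x) ∪
              ((X'.filter fun x => x + t' + 1 ≤ s ∧ a ∈ π (x + t' + 1)).image
                fun x => x + t' + 1)).sup id = s
          · simp [seedStep, ha] at hW hsup
            exact absurd hsup hW.1
          · simp [seedStep, ha, hsup] at hW
            omega
  refine ⟨h1, ?_⟩
  intro X t h
  induction t with
  | zero => exact h
  | succ n ih =>
    have := h1 X (n+1) (by omega) h
    simpa using ih this
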